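/- Let r ≥ 0 be an integer, m = 3^r and n = 2m. Let K be a number field with ring of integers O_K and let 𝔭 ⊂ O_K be a prime ideal lying over 3 whose residue field 𝔽_𝔭 = O_K/𝔭 has degree exactly m over 𝔽₃. Let (x₀,y₀) ∈ O_K² satisfy g^n(x₀,y₀) = (x₀,y₀), write (x_i,y_i) := g^i(x₀,y₀) for 0 ≤ i ≤ n−1 (these lie in O_K), and set ζ := Σ_{i=0}^{n−1} 2^{n−1−i} y_i ∈ O_K. Then the image ζ̄ of ζ in 𝔽_𝔭 satisfies ζ̄ = Σ_{i=0}^{n−1} (−1)^{n−1−i} ȳ_i = Tr_{𝔽_𝔭/𝔽₃}(x̄₀ − ȳ₀), where bars denote images in 𝔽_𝔭 and Tr_{𝔽_𝔭/𝔽₃} is the field trace of 𝔽_𝔭 over 𝔽₃. -/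

import Mathlib

open NumberField

set_option synthInstance.maxHeartbeats 1000000
set_option maxHeartbeats 1000000

open Finset Polynomial

section Aux
variable {R : Type*} [CommRing R]

lemma stmt10_cube_add (h3 : (3:R) = 0) (a b : R) : (a + b) ^ 3 = a ^ 3 + b ^ 3 := by
  linear_combination (a^2*b + a*b^2) * h3

lemma stmt10_cube_one_sub (h3 : (3:R) = 0) (z : R) : (1 - z) ^ 3 = 1 - z ^ 3 := by
  linear_combination (z^2 - z) * h3

lemma stmt10_cube_one_add (h3 : (3:R) = 0) (z : R) : (1 + z) ^ 3 = 1 + z ^ 3 := by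
  linear_combination (z^2 + z) * h3

lemma stmt10_pow3k_one_sub (h3 : (3:R) = 0) (z : R) (k : ℕ) :
    (1 - z) ^ (3 ^ k) = 1 - z ^ (3 ^ k) := by
  induction k with
  | zero => simp
  | succ k ih => rw [pow_succ, pow_mul, ih, stmt10_cube_one_sub h3, ← pow_mul, ← pow_succ]

lemma stmt10_pow3k_one_add (h3 : (3:R) = 0) (z : R) (k : ℕ) :
    (1 + z) ^ (3 ^ k) = 1 + z ^ (3 ^ k) := by
  induction k with
  | zero => simp
  | succ k ih => rw [pow_succ, pow_mul, ih, stmt10_cube_one_add h3, ← pow_mul, ← pow_succ]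

lemma stmt10_cube_t (h3 : (3:R) = 0) (u v : R) :
    (1 + u - v) ^ 3 = 1 + u ^ 3 - v ^ 3 := by
  linear_combination ((u - v) + (u - v)^2 - u^2*v + u*v^2) * h3

lemma stmt10_pow3k_t (h3 : (3:R) = 0) (u v : R) (k : ℕ) :
    (1 + u - v) ^ (3 ^ k) = 1 + u ^ (3 ^ k) - v ^ (3 ^ k) := by
  induction k with
  | zero => simp
  | succ k ih => rw [pow_succ, pow_mul, ih, stmt10_cube_t h3, ← pow_mul, ← pow_mul, ← pow_succ]

lemma stmt10_geom_t_closed (h3 : (3:R) = 0) (x y : R) (hxy : x * y = 1) (k : ℕ) :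
    (∑ j ∈ range (3 ^ k), (1 + y - x) ^ j)
      = y ^ (3 ^ k - 1) * (1 - x ^ 2) ^ (3 ^ k - 1) := by
  induction k with
  | zero => simp
  | succ k ih =>
    have hq : 1 ≤ 3 ^ k := Nat.one_le_pow _ _ (by norm_num)
    have hsplit : 3 ^ (k + 1) = 3 ^ k + (3 ^ k + 3 ^ k) := by ring
    have e1 : ∀ c : ℕ, (∑ j ∈ range (3 ^ k), (1 + y - x) ^ (c + j))
        = (1 + y - x) ^ c * ∑ j ∈ range (3 ^ k), (1 + y - x) ^ j := by
      intro c
      rw [Finset.mul_sum]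
      exact Finset.sum_congr rfl fun j _ => pow_add _ c j
    have A2 : (∑ j ∈ range (3 ^ k + 3 ^ k), (1 + y - x) ^ (3 ^ k + j))
        = (1 + y - x) ^ (3 ^ k) * (∑ j ∈ range (3 ^ k), (1 + y - x) ^ j)
          + (1 + y - x) ^ (3 ^ k + 3 ^ k) * ∑ j ∈ range (3 ^ k), (1 + y - x) ^ j := by
      rw [Finset.sum_range_add, e1]
      congr 1
      rw [← e1 (3 ^ k + 3 ^ k)]
      exact Finset.sum_congr rfl fun j _ => by rw [← add_assoc]
    rw [hsplit, Finset.sum_range_add, A2, ih, pow_add, stmt10_pow3k_t h3 y x k]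
    have hyx : y ^ 3 ^ k * (x ^ 3 ^ k * x ^ 3 ^ k) = x ^ 3 ^ k := by
      rw [← mul_assoc, ← mul_pow, mul_comm y x, hxy, one_pow, one_mul]
    have h2 : y ^ 3 ^ k - x ^ 3 ^ k = y ^ 3 ^ k * (1 - x ^ 2) ^ 3 ^ k := by
      rw [stmt10_pow3k_one_sub h3 (x ^ 2) k]
      linear_combination hyx
    have h1 : (1:R) + (1 + y ^ 3 ^ k - x ^ 3 ^ k) + (1 + y ^ 3 ^ k - x ^ 3 ^ k) ^ 2
        = (y ^ 3 ^ k * (1 - x ^ 2) ^ 3 ^ k) ^ 2 := by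
      rw [← h2]
      linear_combination (1 + y ^ 3 ^ k - x ^ 3 ^ k) * h3
    have hexp : 3 ^ k + (3 ^ k + 3 ^ k) - 1 = (3 ^ k - 1) + (3 ^ k + 3 ^ k) := by omega
    rw [hexp]
    calc y ^ (3 ^ k - 1) * (1 - x ^ 2) ^ (3 ^ k - 1)
          + ((1 + y ^ 3 ^ k - x ^ 3 ^ k) * (y ^ (3 ^ k - 1) * (1 - x ^ 2) ^ (3 ^ k - 1))
          + (1 + y ^ 3 ^ k - x ^ 3 ^ k) * (1 + y ^ 3 ^ k - x ^ 3 ^ k)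
            * (y ^ (3 ^ k - 1) * (1 - x ^ 2) ^ (3 ^ k - 1)))
        = y ^ (3 ^ k - 1) * (1 - x ^ 2) ^ (3 ^ k - 1)
            * ((1:R) + (1 + y ^ 3 ^ k - x ^ 3 ^ k) + (1 + y ^ 3 ^ k - x ^ 3 ^ k) ^ 2) := by
          ring
      _ = y ^ (3 ^ k - 1) * (1 - x ^ 2) ^ (3 ^ k - 1)
            * (y ^ 3 ^ k * (1 - x ^ 2) ^ 3 ^ k) ^ 2 := by rw [h1]
      _ = y ^ ((3 ^ k - 1) + (3 ^ k + 3 ^ k))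
            * (1 - x ^ 2) ^ ((3 ^ k - 1) + (3 ^ k + 3 ^ k)) := by
          rw [pow_add, pow_add]; ring

/-- The main abstract identity, in any commutative ring where `3 = 0` with a `2·3^r`-th
root of unity `x`. -/
lemma stmt10_key_identity (h3 : (3:R) = 0) (r : ℕ) (x y : R) (hxy : x * y = 1)
    (hx : x ^ (2 * 3 ^ r) = 1)
    (hD : (1 + x) ^ (3 ^ r - 1) = ∑ i ∈ range (3 ^ r), (-1 : R) ^ i * x ^ i) :
    (∑ j ∈ range (3 ^ r), (1 + y - x) ^ j) * (y - 1)
      = ∑ i ∈ range (2 * 3 ^ r), (-1 : R) ^ (i + 1) * x ^ i := by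
  have hm : 1 ≤ 3 ^ r := Nat.one_le_pow _ _ (by norm_num)
  have hmodd : Odd (3 ^ r) := Odd.pow ⟨1, by norm_num⟩
  rw [stmt10_geom_t_closed h3 x y hxy r]
  have hy1 : y - 1 = y * (1 - x) := by linear_combination hxy
  have hsq : (1 - x ^ 2 : R) = (1 - x) * (1 + x) := by ring
  have hym : y ^ 3 ^ r * x ^ 3 ^ r = 1 := by
    rw [← mul_pow, mul_comm y x, hxy, one_pow]
  have hyxm : y ^ 3 ^ r = x ^ 3 ^ r := by
    have h2m : x ^ (2 * 3 ^ r) = x ^ 3 ^ r * x ^ 3 ^ r := by rw [two_mul, pow_add]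
    calc y ^ 3 ^ r = y ^ 3 ^ r * x ^ (2 * 3 ^ r) := by rw [hx, mul_one]
      _ = (y ^ 3 ^ r * x ^ 3 ^ r) * x ^ 3 ^ r := by rw [h2m]; ring
      _ = x ^ 3 ^ r := by rw [hym, one_mul]
  have step1 : y ^ (3 ^ r - 1) * (1 - x ^ 2) ^ (3 ^ r - 1) * (y - 1)
      = (x ^ 3 ^ r - 1) * (1 + x) ^ (3 ^ r - 1) := by
    have e : y ^ (3 ^ r - 1) * (1 - x ^ 2) ^ (3 ^ r - 1) * (y - 1)
        = (y ^ (3 ^ r - 1) * y) * ((1 - x) ^ (3 ^ r - 1) * (1 - x)) * (1 + x) ^ (3 ^ r - 1) := by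
      rw [hy1, hsq, mul_pow]; ring
    rw [e, ← pow_succ, ← pow_succ, Nat.sub_add_cancel hm, stmt10_pow3k_one_sub h3 x r]
    have e2 : y ^ 3 ^ r * (1 - x ^ 3 ^ r) = x ^ 3 ^ r - 1 := by
      linear_combination hyxm - hym
    linear_combination (1 + x) ^ (3 ^ r - 1) * e2
  rw [step1, hD, two_mul, Finset.sum_range_add]
  have eA : ∑ i ∈ range (3 ^ r), (-1:R) ^ (3 ^ r + i + 1) * x ^ (3 ^ r + i)
      = x ^ 3 ^ r * ∑ i ∈ range (3 ^ r), (-1:R) ^ i * x ^ i := by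
    rw [Finset.mul_sum]
    refine Finset.sum_congr rfl fun i _ => ?_
    rw [pow_add, pow_add, pow_add, hmodd.neg_one_pow]
    ring
  have eB : ∑ i ∈ range (3 ^ r), (-1:R) ^ (i + 1) * x ^ i
      = (-1) * ∑ i ∈ range (3 ^ r), (-1:R) ^ i * x ^ i := by
    rw [Finset.mul_sum]
    refine Finset.sum_congr rfl fun i _ => ?_
    rw [pow_succ]
    ring
  rw [eA, eB]
  ring

end Aux

lemma stmt10_three_zmod : (3 : ZMod 3) = 0 := by decide

lemma stmt10_polyD (r : ℕ) :
    ((1 + X) ^ (3 ^ r - 1) : Polynomial (ZMod 3))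
      = ∑ i ∈ range (3 ^ r), (-1) ^ i * X ^ i := by
  have h3 : (3 : Polynomial (ZMod 3)) = 0 := by
    rw [show (3 : Polynomial (ZMod 3)) = ((3:ℕ) : Polynomial (ZMod 3)) by norm_cast,
      ← Polynomial.C_eq_natCast, show ((3:ℕ) : ZMod 3) = 0 by decide, Polynomial.C_0]
  have hm : 1 ≤ 3 ^ r := Nat.one_le_pow _ _ (by norm_num)
  have hmodd : Odd (3 ^ r) := Odd.pow ⟨1, by norm_num⟩
  have hne : (1 + X : Polynomial (ZMod 3)) ≠ 0 := by
    rw [add_comm, ← Polynomial.C_1]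
    exact Polynomial.X_add_C_ne_zero 1
  apply mul_left_cancel₀ hne
  rw [← pow_succ', Nat.sub_add_cancel hm, stmt10_pow3k_one_add h3 X r]
  have hsum : (∑ i ∈ range (3 ^ r), ((-1) ^ i * X ^ i : Polynomial (ZMod 3)))
      = ∑ i ∈ range (3 ^ r), (-X) ^ i :=
    Finset.sum_congr rfl fun i _ => (neg_pow (X : Polynomial (ZMod 3)) i).symm
  have hg := geom_sum_mul (-X : Polynomial (ZMod 3)) (3 ^ r)
  rw [Odd.neg_pow hmodd] at hg
  linear_combination hg - (1 + X) * hsum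

lemma stmt10_trace_eq_sum_frobenius {F : Type*} [Field F] [Fintype F] [Algebra (ZMod 3) F]
    {m : ℕ} (hm : 0 < m) (hcard : Fintype.card F = 3 ^ m) (c : F) :
    algebraMap (ZMod 3) F (Algebra.trace (ZMod 3) F c) = ∑ j ∈ Finset.range m, c ^ 3 ^ j := by
  haveI : Fact (Nat.Prime 3) := ⟨by norm_num⟩
  haveI : CharP F 3 := charP_of_injective_algebraMap' (ZMod 3) 3
  haveI := Classical.decEq F
  haveI : Module.Finite (ZMod 3) F := Module.finite_iff_finite.mpr (inferInstance : Finite F)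
  haveI : FiniteDimensional (ZMod 3) F := inferInstance
  let φ : F ≃ₐ[ZMod 3] F := AlgEquiv.ofRingEquiv (f := frobeniusEquiv F 3)
    (fun a => by
      show (frobeniusEquiv F 3) (algebraMap (ZMod 3) F a) = algebraMap (ZMod 3) F a
      rw [show ((frobeniusEquiv F 3) (algebraMap (ZMod 3) F a)) = (algebraMap (ZMod 3) F a) ^ 3
        from rfl, ← map_pow, ZMod.pow_card])
  have hφ : ∀ z : F, φ z = z ^ 3 := fun z => rfl
  have hφpow : ∀ (j : ℕ) (z : F), (φ ^ j) z = z ^ 3 ^ j := by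
    intro j
    induction j with
    | zero => intro z; simp
    | succ j ih =>
      intro z
      rw [pow_succ, AlgEquiv.mul_apply, hφ, ih, ← pow_mul, pow_succ']
  have hφm : φ ^ m = 1 := by
    apply AlgEquiv.ext
    intro z
    rw [hφpow, ← hcard, FiniteField.pow_card, AlgEquiv.one_apply]
  have hdvd : orderOf φ ∣ m := orderOf_dvd_of_pow_eq_one hφm
  have horderpos : 0 < orderOf φ := orderOf_pos φ
  have hmle : m ≤ orderOf φ := by
    by_contra hlt
    push_neg at hlt
    set d := orderOf φ with hd
    have hall : ∀ z : F, z ^ 3 ^ d = z := by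
      intro z
      have h1 := pow_orderOf_eq_one φ
      calc z ^ 3 ^ d = (φ ^ d) z := (hφpow d z).symm
        _ = z := by rw [h1, AlgEquiv.one_apply]
    have hne : (Polynomial.X ^ 3 ^ d - Polynomial.X : Polynomial F) ≠ 0 :=
      FiniteField.X_pow_card_pow_sub_X_ne_zero F horderpos.ne' (by norm_num)
    have hdeg : (Polynomial.X ^ 3 ^ d - Polynomial.X : Polynomial F).natDegree = 3 ^ d :=
      FiniteField.X_pow_card_pow_sub_X_natDegree_eq F horderpos.ne' (by norm_num)
    have hsub : Finset.univ
        ⊆ (Polynomial.X ^ 3 ^ d - Polynomial.X : Polynomial F).roots.toFinset := by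
      intro z _
      rw [Multiset.mem_toFinset, Polynomial.mem_roots hne]
      simp [Polynomial.IsRoot, hall z]
    have hle : Fintype.card F ≤ 3 ^ d := by
      have h5 := (Polynomial.X ^ 3 ^ d - Polynomial.X : Polynomial F).card_roots'
      rw [hdeg] at h5
      calc Fintype.card F = Finset.univ.card := Finset.card_univ.symm
        _ ≤ (Polynomial.X ^ 3 ^ d - Polynomial.X : Polynomial F).roots.toFinset.card :=
            Finset.card_le_card hsub
        _ ≤ Multiset.card (Polynomial.X ^ 3 ^ d - Polynomial.X : Polynomial F).roots :=
            Multiset.toFinset_card_le _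
        _ ≤ 3 ^ d := h5
    rw [hcard] at hle
    have := (Nat.pow_le_pow_iff_right (by norm_num : 1 < 3)).mp hle
    omega
  have horder : orderOf φ = m := le_antisymm (Nat.le_of_dvd hm hdvd) hmle
  have hcardG : Fintype.card (F ≃ₐ[ZMod 3] F) = m := by
    rw [← Nat.card_eq_fintype_card, IsGalois.card_aut_eq_finrank]
    have h1 : Fintype.card F = Fintype.card (ZMod 3) ^ Module.finrank (ZMod 3) F :=
      Module.card_eq_pow_finrank
    rw [ZMod.card, hcard] at h1
    exact (Nat.pow_right_injective (by norm_num) h1).symm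
  have hbij : Function.Bijective (fun j : Fin m => φ ^ (j : ℕ)) := by
    rw [Fintype.bijective_iff_injective_and_card]
    constructor
    · intro j k hjk
      have := pow_eq_pow_iff_modEq.mp hjk
      rw [horder] at this
      exact Fin.ext ((Nat.ModEq.eq_of_lt_of_lt this j.2 k.2))
    · rw [Fintype.card_fin, hcardG]
  rw [trace_eq_sum_automorphisms]
  rw [← Function.Bijective.sum_comp hbij (fun σ => σ c)]
  rw [← Fin.sum_univ_eq_sum_range (fun j => c ^ 3 ^ j) m]
  exact Finset.sum_congr rfl fun j _ => hφpow j c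

/-- The heart of the argument, on the residue-field side. -/
lemma stmt10_henon_trace {F : Type*} [Field F] [Fintype F] [Algebra (ZMod 3) F]
    (r : ℕ) (hcard : Fintype.card F = 3 ^ 3 ^ r)
    (a : ℕ → F)
    (hpera : ∀ i, a (i + 2 * 3 ^ r) = a i)
    (hreca : ∀ i, a i ^ 3 = a (i + (2 * 3 ^ r - 1)) + a i - a (i + 1)) :
    ∑ i ∈ Finset.range (2 * 3 ^ r), (-1 : F) ^ (i + 1) * a i
      = algebraMap (ZMod 3) F
          (Algebra.trace (ZMod 3) F (a (2 * 3 ^ r - 1) - a 0)) := by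
  haveI : Fact (Nat.Prime 3) := ⟨by norm_num⟩
  haveI : CharP F 3 := charP_of_injective_algebraMap' (ZMod 3) 3
  have h3F : (3:F) = 0 := by exact_mod_cast CharP.cast_eq_zero F 3
  have hm : 1 ≤ 3 ^ r := Nat.one_le_pow _ _ (by norm_num)
  have hn1 : 1 ≤ 2 * 3 ^ r := by omega
  -- the evaluation additive map  X^i ↦ a i
  let Φ : Polynomial (ZMod 3) →+ F := AddMonoidHom.mk'
    (fun p => p.sum fun i c => algebraMap (ZMod 3) F c * a i)
    (fun p q => Polynomial.sum_add_index p q (fun i c => algebraMap (ZMod 3) F c * a i)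
      (fun i => show algebraMap (ZMod 3) F 0 * a i = 0 by rw [map_zero, zero_mul])
      (fun i b₁ b₂ => show algebraMap (ZMod 3) F (b₁ + b₂) * a i = _ by
        rw [map_add, add_mul]))
  have hmono : ∀ (i : ℕ) (c : ZMod 3),
      Φ (Polynomial.monomial i c) = algebraMap (ZMod 3) F c * a i := by
    intro i c
    show (Polynomial.monomial i c).sum (fun i c => algebraMap (ZMod 3) F c * a i)
      = algebraMap (ZMod 3) F c * a i
    exact Polynomial.sum_monomial_index c _
      (show algebraMap (ZMod 3) F 0 * a i = 0 by rw [map_zero, zero_mul])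
  have hXpow : ∀ i : ℕ, Φ (X ^ i) = a i := by
    intro i
    rw [Polynomial.X_pow_eq_monomial, hmono, map_one, one_mul]
  have hcube : ∀ p, (Φ p) ^ 3 = Φ ((X ^ (2 * 3 ^ r - 1) + 1 - X) * p) := by
    intro p
    induction p using Polynomial.induction_on' with
    | add p q hp hq =>
      rw [map_add, stmt10_cube_add h3F, hp, hq, mul_add, map_add]
    | monomial i c =>
      have hc3 : (algebraMap (ZMod 3) F c) ^ 3 = algebraMap (ZMod 3) F c := by
        rw [← map_pow, ZMod.pow_card]
      have expand : (X ^ (2 * 3 ^ r - 1) + 1 - X) * Polynomial.monomial i c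
          = Polynomial.monomial (i + (2 * 3 ^ r - 1)) c + Polynomial.monomial i c
            - Polynomial.monomial (i + 1) c := by
        simp only [← Polynomial.C_mul_X_pow_eq_monomial]
        ring
      rw [hmono, expand, map_sub, map_add, hmono, hmono, hmono, mul_pow, hc3, hreca i]
      ring
  have hcubek : ∀ (k : ℕ) (p),
      (Φ p) ^ 3 ^ k = Φ ((X ^ (2 * 3 ^ r - 1) + 1 - X) ^ k * p) := by
    intro k
    induction k with
    | zero => intro p; simp
    | succ k ih =>
      intro p
      rw [pow_succ, pow_mul, ih, hcube]
      congr 1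
      ring
  have hper' : ∀ p, Φ (X ^ (2 * 3 ^ r) * p) = Φ p := by
    intro p
    induction p using Polynomial.induction_on' with
    | add p q hp hq => rw [mul_add, map_add, map_add, hp, hq]
    | monomial i c =>
      have e : (X : Polynomial (ZMod 3)) ^ (2 * 3 ^ r) * Polynomial.monomial i c
          = Polynomial.monomial (i + 2 * 3 ^ r) c := by
        rw [← Polynomial.C_mul_X_pow_eq_monomial, ← Polynomial.C_mul_X_pow_eq_monomial]
        ring
      rw [e, hmono, hmono, hpera i]
  have hdvdΦ : ∀ p q, ((X : Polynomial (ZMod 3)) ^ (2 * 3 ^ r) - 1) ∣ (p - q) → Φ p = Φ q := by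
    rintro p q ⟨h, hh⟩
    have e : p = q + ((X : Polynomial (ZMod 3)) ^ (2 * 3 ^ r) * h - h) := by
      linear_combination hh
    rw [e, map_add, map_sub, hper' h, sub_self, add_zero]
  -- the polynomial congruence, proved in `AdjoinRoot (X ^ n - 1)`
  set f : Polynomial (ZMod 3) := X ^ (2 * 3 ^ r) - 1 with hf
  have hΦeq : Φ ((∑ j ∈ range (3 ^ r), (X ^ (2 * 3 ^ r - 1) + 1 - X) ^ j)
        * (X ^ (2 * 3 ^ r - 1) - 1))
      = Φ (∑ i ∈ range (2 * 3 ^ r), (-1) ^ (i + 1) * X ^ i) := by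
    apply hdvdΦ
    rw [← AdjoinRoot.mk_eq_mk]
    set x : AdjoinRoot f := AdjoinRoot.root f with hxdef
    have hxn : x ^ (2 * 3 ^ r) = 1 := by
      have h0 : AdjoinRoot.mk f f = 0 := AdjoinRoot.mk_self
      rw [hf, map_sub, map_pow, AdjoinRoot.mk_X, map_one, sub_eq_zero] at h0
      exact h0
    have h3B : (3 : AdjoinRoot f) = 0 := by
      have e1 : algebraMap (ZMod 3) (AdjoinRoot f) (3 : ZMod 3) = (3 : AdjoinRoot f) :=
        map_ofNat _ 3
      rw [← e1, stmt10_three_zmod, map_zero]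
    have hxy : x * x ^ (2 * 3 ^ r - 1) = 1 := by
      rw [← pow_succ', Nat.sub_add_cancel hn1, hxn]
    have hD : (1 + x) ^ (3 ^ r - 1) = ∑ i ∈ range (3 ^ r), (-1 : AdjoinRoot f) ^ i * x ^ i := by
      have := congrArg (AdjoinRoot.mk f) (stmt10_polyD r)
      rw [map_pow, map_add, map_one, AdjoinRoot.mk_X, map_sum] at this
      rw [this]
      refine Finset.sum_congr rfl fun i _ => ?_
      rw [map_mul, map_pow, map_pow, map_neg, map_one, AdjoinRoot.mk_X]
    have hkey := stmt10_key_identity h3B r x (x ^ (2 * 3 ^ r - 1)) hxy hxn hD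
    -- transport both sides through `AdjoinRoot.mk f`
    rw [map_mul, map_sum, map_sub, map_pow, AdjoinRoot.mk_X, map_one, map_sum]
    calc (∑ j ∈ range (3 ^ r),
            AdjoinRoot.mk f ((X ^ (2 * 3 ^ r - 1) + 1 - X) ^ j)) * (x ^ (2 * 3 ^ r - 1) - 1)
        = (∑ j ∈ range (3 ^ r), (1 + x ^ (2 * 3 ^ r - 1) - x) ^ j)
            * (x ^ (2 * 3 ^ r - 1) - 1) := by
          congr 1
          refine Finset.sum_congr rfl fun j _ => ?_
          rw [map_pow, map_sub, map_add, map_pow, AdjoinRoot.mk_X, map_one]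
          congr 1
          ring
      _ = ∑ i ∈ range (2 * 3 ^ r), (-1 : AdjoinRoot f) ^ (i + 1) * x ^ i := hkey
      _ = ∑ i ∈ range (2 * 3 ^ r),
            AdjoinRoot.mk f ((-1) ^ (i + 1) * X ^ i) := by
          refine Finset.sum_congr rfl fun i _ => ?_
          rw [map_mul, map_pow, map_pow, map_neg, map_one, AdjoinRoot.mk_X]
  -- evaluate the two sides of `hΦeq`
  have eval2 : Φ (∑ i ∈ range (2 * 3 ^ r), (-1) ^ (i + 1) * X ^ i)
      = ∑ i ∈ Finset.range (2 * 3 ^ r), (-1 : F) ^ (i + 1) * a i := by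
    rw [map_sum]
    refine Finset.sum_congr rfl fun i _ => ?_
    have e : ((-1 : Polynomial (ZMod 3)) ^ (i + 1) * X ^ i)
        = Polynomial.monomial i ((-1) ^ (i + 1)) := by
      rw [← Polynomial.C_mul_X_pow_eq_monomial, map_pow, map_neg, map_one]
    rw [e, hmono, map_pow, map_neg, map_one]
  have e0 : Φ (X ^ (2 * 3 ^ r - 1) - 1) = a (2 * 3 ^ r - 1) - a 0 := by
    rw [map_sub, hXpow, show (1 : Polynomial (ZMod 3)) = X ^ 0 by rw [pow_zero], hXpow]
  have eval1 : algebraMap (ZMod 3) F (Algebra.trace (ZMod 3) F (a (2 * 3 ^ r - 1) - a 0))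
      = Φ ((∑ j ∈ range (3 ^ r), (X ^ (2 * 3 ^ r - 1) + 1 - X) ^ j)
          * (X ^ (2 * 3 ^ r - 1) - 1)) := by
    rw [stmt10_trace_eq_sum_frobenius (pow_pos (by norm_num : (0:ℕ) < 3) r) hcard]
    rw [Finset.sum_mul, map_sum]
    refine Finset.sum_congr rfl fun j _ => ?_
    rw [← e0, hcubek j]
  rw [← eval2, ← hΦeq, ← eval1]


/-- The Hénon map `g(x,y) = (y, x + y - y³)`, over an arbitrary commutative ring. -/
def gR {R : Type*} [CommRing R] (P : R × R) : R × R :=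
  (P.2, P.1 + P.2 - P.2 ^ 3)

/-- Let `m = 3^r`, `n = 2m`, `K` a number field, `𝔭 ⊂ O_K` a prime over `3` whose residue
field `𝔽_𝔭 = O_K/𝔭` has exactly `3^m` elements (degree `m` over `𝔽₃`), and `(x₀,y₀) ∈ O_K²`
a fixed point of `g^n`.  Set `ζ = Σ_{i=0}^{n-1} 2^{n-1-i} y_i` where `(x_i,y_i) = g^i(x₀,y₀)`.
Then `ζ̄ = Σ_{i=0}^{n-1} (-1)^{n-1-i} ȳ_i = Tr_{𝔽_𝔭/𝔽₃}(x̄₀ - ȳ₀)` in `𝔽_𝔭`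
(the trace being taken for any `𝔽₃ = ZMod 3`-algebra structure on `𝔽_𝔭`; such a structure
exists and is unique since `3 ∈ 𝔭`). -/
theorem stmt10 (r : ℕ) (K : Type*) [Field K] [NumberField K]
    (𝔭 : Ideal (𝓞 K)) (hprime : 𝔭.IsPrime) (h3 : (3 : 𝓞 K) ∈ 𝔭)
    (hcard : Nat.card (𝓞 K ⧸ 𝔭) = 3 ^ (3 ^ r))
    (P : 𝓞 K × 𝓞 K) (hP : gR^[2 * 3 ^ r] P = P) :
    Ideal.Quotient.mk 𝔭
        (∑ i ∈ Finset.range (2 * 3 ^ r), 2 ^ (2 * 3 ^ r - 1 - i) * (gR^[i] P).2) =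
      (∑ i ∈ Finset.range (2 * 3 ^ r),
        (-1 : 𝓞 K ⧸ 𝔭) ^ (2 * 3 ^ r - 1 - i) * Ideal.Quotient.mk 𝔭 (gR^[i] P).2) ∧
    ∀ A : Algebra (ZMod 3) (𝓞 K ⧸ 𝔭),
      letI := A
      Ideal.Quotient.mk 𝔭
          (∑ i ∈ Finset.range (2 * 3 ^ r), 2 ^ (2 * 3 ^ r - 1 - i) * (gR^[i] P).2) =
        algebraMap (ZMod 3) (𝓞 K ⧸ 𝔭)
          (Algebra.trace (ZMod 3) (𝓞 K ⧸ 𝔭)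
            (Ideal.Quotient.mk 𝔭 P.1 - Ideal.Quotient.mk 𝔭 P.2)) := by
  have hn1 : 1 ≤ 2 * 3 ^ r := by
    have := Nat.one_le_pow r 3 (by norm_num)
    omega
  have h30 : Ideal.Quotient.mk 𝔭 (3 : 𝓞 K) = 0 := Ideal.Quotient.eq_zero_iff_mem.mpr h3
  have h2 : Ideal.Quotient.mk 𝔭 (2 : 𝓞 K) = -1 := by
    have e : (2 : 𝓞 K) = 3 - 1 := by norm_num
    rw [e, map_sub, h30, map_one, zero_sub]
  have part1 : Ideal.Quotient.mk 𝔭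
        (∑ i ∈ Finset.range (2 * 3 ^ r), 2 ^ (2 * 3 ^ r - 1 - i) * (gR^[i] P).2) =
      (∑ i ∈ Finset.range (2 * 3 ^ r),
        (-1 : 𝓞 K ⧸ 𝔭) ^ (2 * 3 ^ r - 1 - i) * Ideal.Quotient.mk 𝔭 (gR^[i] P).2) := by
    rw [map_sum]
    refine Finset.sum_congr rfl fun i _ => ?_
    rw [map_mul, map_pow, h2]
  refine ⟨part1, ?_⟩
  intro A
  letI := A
  -- sequence facts (no field structure needed)
  have hiter : ∀ i : ℕ, gR^[i+1] P = gR (gR^[i] P) :=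
    fun i => Function.iterate_succ_apply' gR i P
  have hperP : ∀ i : ℕ, gR^[i + 2 * 3 ^ r] P = gR^[i] P := by
    intro i
    rw [Function.iterate_add_apply, hP]
  have hx1 : ∀ i : ℕ, (gR^[i+1] P).1 = (gR^[i] P).2 := by
    intro i; rw [hiter i]; rfl
  have hy1 : ∀ i : ℕ, (gR^[i+1] P).2
      = (gR^[i] P).1 + (gR^[i] P).2 - (gR^[i] P).2 ^ 3 := by
    intro i; rw [hiter i]; rfl
  have hx2 : ∀ i : ℕ, (gR^[i] P).1 = (gR^[i + (2 * 3 ^ r - 1)] P).2 := by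
    intro i
    have e : i + (2 * 3 ^ r - 1) + 1 = i + 2 * 3 ^ r := by omega
    calc (gR^[i] P).1 = (gR^[i + 2 * 3 ^ r] P).1 := by rw [hperP i]
      _ = (gR^[i + (2 * 3 ^ r - 1) + 1] P).1 := by rw [e]
      _ = (gR^[i + (2 * 3 ^ r - 1)] P).2 := hx1 _
  have hcube0 : ∀ i : ℕ, ((gR^[i] P).2) ^ 3
      = (gR^[i + (2 * 3 ^ r - 1)] P).2 + (gR^[i] P).2 - (gR^[i+1] P).2 := by
    intro i
    rw [hy1 i, ← hx2 i]
    ring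
  have hpera' : ∀ i : ℕ, Ideal.Quotient.mk 𝔭 ((gR^[i + 2 * 3 ^ r] P).2)
      = Ideal.Quotient.mk 𝔭 ((gR^[i] P).2) := fun i => by rw [hperP i]
  have hreca' : ∀ i : ℕ, Ideal.Quotient.mk 𝔭 ((gR^[i] P).2) ^ 3
      = Ideal.Quotient.mk 𝔭 ((gR^[i + (2 * 3 ^ r - 1)] P).2)
        + Ideal.Quotient.mk 𝔭 ((gR^[i] P).2)
        - Ideal.Quotient.mk 𝔭 ((gR^[i+1] P).2) := by
    intro i
    rw [← map_pow, hcube0 i, map_sub, map_add]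
  -- sign conversion
  have hodd : Odd (2 * 3 ^ r - 1) := Nat.Even.sub_odd hn1 (even_two_mul _) odd_one
  have hsign : ∀ i ∈ Finset.range (2 * 3 ^ r),
      (-1 : 𝓞 K ⧸ 𝔭) ^ (2 * 3 ^ r - 1 - i) * Ideal.Quotient.mk 𝔭 ((gR^[i] P).2)
        = (-1) ^ (i + 1) * Ideal.Quotient.mk 𝔭 ((gR^[i] P).2) := by
    intro i hi
    have hi' : i < 2 * 3 ^ r := Finset.mem_range.mp hi
    have hexp : 2 * 3 ^ r - 1 - i + 2 * i = 2 * 3 ^ r - 1 + i := by omega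
    congr 1
    calc (-1 : 𝓞 K ⧸ 𝔭) ^ (2 * 3 ^ r - 1 - i)
        = (-1) ^ (2 * 3 ^ r - 1 - i) * ((-1) ^ 2) ^ i := by
          rw [neg_one_sq, one_pow, mul_one]
      _ = (-1) ^ (2 * 3 ^ r - 1 - i + 2 * i) := by rw [← pow_mul, ← pow_add]
      _ = (-1) ^ (2 * 3 ^ r - 1 + i) := by rw [hexp]
      _ = (-1) ^ (i + 1) := by
          rw [pow_add, hodd.neg_one_pow, pow_succ]
          ring
  have hP1 : Ideal.Quotient.mk 𝔭 P.1
      = Ideal.Quotient.mk 𝔭 ((gR^[2 * 3 ^ r - 1] P).2) := by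
    have e := hx2 0
    rw [zero_add] at e
    rw [show (gR^[0] P) = P from Function.iterate_zero_apply gR P] at e
    rw [e]
  have hP2 : Ideal.Quotient.mk 𝔭 P.2
      = Ideal.Quotient.mk 𝔭 ((gR^[0] P).2) := by
    rw [show (gR^[0] P) = P from Function.iterate_zero_apply gR P]
  rw [part1, Finset.sum_congr rfl hsign, hP1, hP2]
  -- now set up the field structure on the residue field and conclude
  haveI hfin : Finite (𝓞 K ⧸ 𝔭) :=
    (Nat.card_ne_zero.mp (by rw [hcard]; exact (pow_pos (by norm_num) _).ne')).2
  have hbot : 𝔭 ≠ ⊥ := by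
    intro hb
    rw [hb, Ideal.mem_bot] at h3
    have h3ne : (3 : 𝓞 K) ≠ 0 := by
      have : ((3:ℕ) : 𝓞 K) ≠ 0 := Nat.cast_ne_zero.mpr (by norm_num)
      exact_mod_cast this
    exact h3ne h3
  haveI hmax : 𝔭.IsMaximal := Ideal.IsPrime.isMaximal hprime hbot
  letI instF : Field (𝓞 K ⧸ 𝔭) := Ideal.Quotient.field 𝔭
  letI instFin : Fintype (𝓞 K ⧸ 𝔭) := Fintype.ofFinite _
  have hcardF : Fintype.card (𝓞 K ⧸ 𝔭) = 3 ^ 3 ^ r := by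
    rw [← Nat.card_eq_fintype_card, hcard]
  exact @stmt10_henon_trace (𝓞 K ⧸ 𝔭) instF instFin A r hcardF
    (fun i => Ideal.Quotient.mk 𝔭 ((gR^[i] P).2)) hpera' hreca'
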